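/- Let X be a uniformly smooth Banach space. Then the pair (X, 𝕂) has property [P] (the BPBp for strongly exposing functionals) if and only if the strongly exposed points of B_X are dense in S_X. -/

import Mathlib

open Filter Topology

section Defs

variable (𝕜 : Type*) [RCLike 𝕜]

/-- `f` strongly exposes `x₀` in the closed unit ball: `x₀` lies in the ball, the real part of
`f` attains its maximum over the ball at `x₀`, and every maximizing sequence in the ball
converges in norm to `x₀`. -/
def StronglyExposes {X : Type*} [NormedAddCommGroup X] [NormedSpace 𝕜 X]
    (f : X →L[𝕜] 𝕜) (x₀ : X) : Prop :=
  ‖x₀‖ ≤ 1 ∧ (∀ x : X, ‖x‖ ≤ 1 → RCLike.re (f x) ≤ RCLike.re (f x₀)) ∧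
    ∀ u : ℕ → X, (∀ n, ‖u n‖ ≤ 1) →
      Tendsto (fun n => RCLike.re (f (u n))) atTop (𝓝 (RCLike.re (f x₀))) →
      Tendsto u atTop (𝓝 x₀)

/-- `x₀` is a strongly exposed point of the closed unit ball. -/
def StronglyExposedPoint {X : Type*} [NormedAddCommGroup X] [NormedSpace 𝕜 X]
    (x₀ : X) : Prop :=
  ∃ f : X →L[𝕜] 𝕜, f ≠ 0 ∧ StronglyExposes 𝕜 f x₀

variable {X Y : Type*} [NormedAddCommGroup X] [NormedSpace 𝕜 X]
  [NormedAddCommGroup Y] [NormedSpace 𝕜 Y]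

/-- `S` is range strongly exposing with witness `x₀`. -/
def RSEAt (S : X →L[𝕜] Y) (x₀ : X) : Prop :=
  ‖x₀‖ = 1 ∧ ‖S x₀‖ = ‖S‖ ∧
    ∀ u : ℕ → X, (∀ n, ‖u n‖ ≤ 1) →
      Tendsto (fun n => ‖S (u n)‖) atTop (𝓝 ‖S‖) →
      ∃ (σ : ℕ → ℕ) (l : 𝕜), StrictMono σ ∧ ‖l‖ = 1 ∧
        Tendsto (fun n => S (u (σ n))) atTop (𝓝 (l • S x₀))

/-- `S` is a range strongly exposing operator. -/
def RSE (S : X →L[𝕜] Y) : Prop := ∃ x₀ : X, RSEAt 𝕜 S x₀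

/-- `S` is absolutely strongly exposing with witness `x₀`. -/
def ASEAt (S : X →L[𝕜] Y) (x₀ : X) : Prop :=
  ‖x₀‖ = 1 ∧
    ∀ u : ℕ → X, (∀ n, ‖u n‖ ≤ 1) →
      Tendsto (fun n => ‖S (u n)‖) atTop (𝓝 ‖S‖) →
      ∃ (σ : ℕ → ℕ) (l : 𝕜), StrictMono σ ∧ ‖l‖ = 1 ∧
        Tendsto (fun n => u (σ n)) atTop (𝓝 (l • x₀))

/-- `S` is an absolutely strongly exposing operator. -/
def ASE (S : X →L[𝕜] Y) : Prop := ∃ x₀ : X, ASEAt 𝕜 S x₀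

variable (X Y)

/-- The pair `(X, Y)` has the Bishop–Phelps–Bollobás property. -/
def BPBp : Prop :=
  ∀ ε > (0:ℝ), ∃ η : ℝ, 0 < η ∧ η < ε ∧
    ∀ T : X →L[𝕜] Y, ‖T‖ = 1 → ∀ x : X, ‖x‖ = 1 → 1 - η < ‖T x‖ →
      ∃ (S : X →L[𝕜] Y) (x₀ : X), ‖x₀‖ = 1 ∧ ‖S‖ = 1 ∧ ‖S x₀‖ = 1 ∧
        ‖S - T‖ < ε ∧ ‖x - x₀‖ < ε

/-- The pair `(X, Y)` has the Bishop–Phelps–Bollobás property for range strongly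
exposing operators. -/
def BPBpRSE : Prop :=
  ∀ ε > (0:ℝ), ∃ η : ℝ, 0 < η ∧ η < ε ∧
    ∀ T : X →L[𝕜] Y, ‖T‖ = 1 → ∀ x : X, ‖x‖ = 1 → 1 - η < ‖T x‖ →
      ∃ (S : X →L[𝕜] Y) (x₀ : X), RSE 𝕜 S ∧ ‖x₀‖ = 1 ∧ ‖S‖ = 1 ∧ ‖S x₀‖ = 1 ∧
        ‖S - T‖ < ε ∧ ‖x - x₀‖ < ε

/-- The pair `(X, Y)` has the Bishop–Phelps–Bollobás property for absolutely strongly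
exposing operators. -/
def BPBpASE : Prop :=
  ∀ ε > (0:ℝ), ∃ η : ℝ, 0 < η ∧ η < ε ∧
    ∀ T : X →L[𝕜] Y, ‖T‖ = 1 → ∀ x : X, ‖x‖ = 1 → 1 - η < ‖T x‖ →
      ∃ (S : X →L[𝕜] Y) (x₀ : X), ASE 𝕜 S ∧ ‖x₀‖ = 1 ∧ ‖S‖ = 1 ∧ ‖S x₀‖ = 1 ∧
        ‖S - T‖ < ε ∧ ‖x - x₀‖ < ε

/-- The pair `(X, Y)` has the BPBp-RSE with a prescribed function `η`. -/
def BPBpRSEWith (η : ℝ → ℝ) : Prop :=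
  ∀ ε ∈ Set.Ioo (0:ℝ) 1,
    ∀ T : X →L[𝕜] Y, ‖T‖ = 1 → ∀ x : X, ‖x‖ = 1 → 1 - η ε < ‖T x‖ →
      ∃ (S : X →L[𝕜] Y) (x₀ : X), RSE 𝕜 S ∧ ‖x₀‖ = 1 ∧ ‖S‖ = 1 ∧ ‖S x₀‖ = 1 ∧
        ‖S - T‖ < ε ∧ ‖x - x₀‖ < ε

end Defs

/-- `Y` is a ℂ-uniformly convex complex normed space. -/
def CUniformConvex (Y : Type*) [NormedAddCommGroup Y] [NormedSpace ℂ Y] : Prop :=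
  ∀ ε > (0:ℝ), ∃ δ > (0:ℝ), ∀ y₀ y₁ : Y,
    (∀ w : ℂ, ‖w‖ = 1 → ‖y₀ + w • y₁‖ ≤ 1) → ε < ‖y₁‖ → ‖y₀‖ < 1 - δ

section Aux
variable {𝕜 X : Type*} [RCLike 𝕜] [NormedAddCommGroup X] [NormedSpace 𝕜 X]

/-- The maximum of the real part over the ball is the norm of the functional. -/
lemma aux_re_eq_norm {f : X →L[𝕜] 𝕜} {z : X} (h : StronglyExposes 𝕜 f z) :
    RCLike.re (f z) = ‖f‖ := by
  obtain ⟨hz, hmax, -⟩ := h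
  have h0 : (0:ℝ) ≤ RCLike.re (f z) := by simpa using hmax 0 (by simp)
  refine le_antisymm ?_ ?_
  · calc RCLike.re (f z) ≤ ‖f z‖ := RCLike.re_le_norm _
      _ ≤ ‖f‖ * ‖z‖ := f.le_opNorm z
      _ ≤ ‖f‖ * 1 := by nlinarith [norm_nonneg f]
      _ = ‖f‖ := mul_one _
  · refine f.opNorm_le_bound h0 fun x => ?_
    rcases eq_or_ne x 0 with rfl | hx
    · simp [mul_nonneg h0]
    rcases eq_or_ne (f x) 0 with hfx | hfx
    · rw [hfx, norm_zero]; positivity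
    have hxn : (0:ℝ) < ‖x‖ := norm_pos_iff.2 hx
    have hcn : (0:ℝ) < ‖f x‖ := norm_pos_iff.2 hfx
    set θ : 𝕜 := (starRingEnd 𝕜) (f x) / (‖f x‖ : 𝕜)
    have hθ : ‖θ‖ = 1 := by
      rw [norm_div, RCLike.norm_conj, RCLike.norm_ofReal, abs_of_pos hcn, div_self hcn.ne']
    set v : X := (θ / (‖x‖ : 𝕜)) • x
    have hv : ‖v‖ ≤ 1 := by
      rw [norm_smul, norm_div, hθ, RCLike.norm_ofReal, abs_of_pos hxn]
      rw [one_div, inv_mul_cancel₀ hxn.ne']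
    have hfv : f v = ((‖f x‖ / ‖x‖ : ℝ) : 𝕜) := by
      have h1 : f v = (θ / (‖x‖ : 𝕜)) * f x := by simp [v, smul_eq_mul]
      have h2 : θ * f x = (‖f x‖ : 𝕜) := by
        rw [div_mul_eq_mul_div, RCLike.conj_mul, sq, mul_div_assoc,
          div_self (RCLike.ofReal_ne_zero.2 hcn.ne'), mul_one]
      rw [h1, div_mul_eq_mul_div, h2]
      push_cast
      ring
    have := hmax v hv
    rw [hfv, RCLike.ofReal_re] at this
    rw [div_le_iff₀ hxn] at this
    exact this

/-- Rotating a strongly exposing functional by a unimodular scalar. -/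
lemma aux_rotate {f : X →L[𝕜] 𝕜} {z : X} (h : StronglyExposes 𝕜 f z) {θ : 𝕜} (hθ : ‖θ‖ = 1) :
    StronglyExposes 𝕜 (θ • f) ((starRingEnd 𝕜 θ) • z) := by
  obtain ⟨hz, hmax, hseq⟩ := h
  have hθ0 : θ ≠ 0 := by intro h0; simp [h0] at hθ
  have hθθ : (starRingEnd 𝕜 θ) * θ = 1 := by
    rw [RCLike.conj_mul, hθ]; norm_num
  have hθθ' : θ * (starRingEnd 𝕜 θ) = 1 := by rw [mul_comm]; exact hθθ
  have key : ∀ w : X, (θ • f) w = f (θ • w) := by intro w; simp [smul_eq_mul, mul_comm]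
  have hval : (θ • f) ((starRingEnd 𝕜 θ) • z) = f z := by
    rw [key, smul_smul, hθθ', one_smul]
  refine ⟨by rw [norm_smul, RCLike.norm_conj, hθ, one_mul]; exact hz, ?_, ?_⟩
  · intro x hx
    rw [hval, key]
    exact hmax _ (by rw [norm_smul, hθ, one_mul]; exact hx)
  · intro u hu htend
    rw [hval] at htend
    simp only [key] at htend
    have h1 : Tendsto (fun n => θ • u n) atTop (𝓝 z) :=
      hseq _ (fun n => by rw [norm_smul, hθ, one_mul]; exact hu n) htend
    have h2 : Tendsto (fun n => (starRingEnd 𝕜 θ) • (θ • u n)) atTop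
        (𝓝 ((starRingEnd 𝕜 θ) • z)) := h1.const_smul _
    simpa [smul_smul, hθθ] using h2

/-- Scaling a strongly exposing functional by a positive real. -/
lemma aux_scale {f : X →L[𝕜] 𝕜} {z : X} (h : StronglyExposes 𝕜 f z) {r : ℝ} (hr : 0 < r) :
    StronglyExposes 𝕜 (r • f) z := by
  obtain ⟨hz, hmax, hseq⟩ := h
  have key : ∀ w : X, RCLike.re ((r • f) w) = r * RCLike.re (f w) := by
    intro w; rw [ContinuousLinearMap.smul_apply, RCLike.smul_re]
  refine ⟨hz, fun x hx => ?_, fun u hu htend => ?_⟩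
  · rw [key, key]; exact mul_le_mul_of_nonneg_left (hmax x hx) hr.le
  · refine hseq u hu ?_
    have := htend.const_mul r⁻¹
    simp only [key, ← mul_assoc, inv_mul_cancel₀ hr.ne', one_mul] at this
    exact this

end Aux

theorem stmt_19 {𝕜 X : Type*} [RCLike 𝕜] [NormedAddCommGroup X] [NormedSpace 𝕜 X]
    [CompleteSpace X] [UniformConvexSpace (X →L[𝕜] 𝕜)] :
    (∀ ε > (0:ℝ), ∃ η > (0:ℝ), ∀ x' : X →L[𝕜] 𝕜, ‖x'‖ = 1 → ∀ x : X, ‖x‖ = 1 →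
      1 - η < RCLike.re (x' x) →
      ∃ (y' : X →L[𝕜] 𝕜) (y : X), (∃ z : X, StronglyExposes 𝕜 y' z) ∧ ‖y'‖ = 1 ∧
        ‖y‖ = 1 ∧ ‖y' y‖ = 1 ∧ ‖x' - y'‖ < ε ∧ ‖x - y‖ < ε)
    ↔ (∀ x : X, ‖x‖ = 1 → ∀ ε > (0:ℝ),
        ∃ y : X, ‖y‖ = 1 ∧ StronglyExposedPoint 𝕜 y ∧ ‖x - y‖ < ε) := by
  constructor
  · -- Property [P] implies density of strongly exposed points
    intro hP x hx ε hε
    obtain ⟨η, hη, hP'⟩ := hP ε hε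
    have hx0 : x ≠ 0 := by intro h; rw [h, norm_zero] at hx; norm_num at hx
    obtain ⟨x', hx'1, hx'x⟩ := exists_dual_vector 𝕜 x (norm_ne_zero_iff.2 hx0)
    have hrex : 1 - η < RCLike.re (x' x) := by
      have h1 : RCLike.re (x' x) = 1 := by rw [hx'x, hx]; simp
      linarith
    obtain ⟨y', y, ⟨z, hzexp⟩, hy'1, hy1, hy'y, -, hxy⟩ := hP' x' hx'1 x hx hrex
    refine ⟨y, hy1, ?_, hxy⟩
    set c : 𝕜 := y' y with hc
    have hcn : ‖c‖ = 1 := hy'y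
    set θ : 𝕜 := (starRingEnd 𝕜) c with hθdef
    have hθn : ‖θ‖ = 1 := by rw [hθdef, RCLike.norm_conj, hcn]
    have hθc : θ * c = 1 := by
      rw [hθdef, RCLike.conj_mul, hcn]; norm_num
    have hcθ : c * θ = 1 := by rw [mul_comm]; exact hθc
    have hzre : RCLike.re (y' z) = 1 := by rw [aux_re_eq_norm hzexp, hy'1]
    have hre_y : RCLike.re (y' (θ • y)) = 1 := by
      rw [map_smul, smul_eq_mul, ← hc, hθc, RCLike.one_re]
    have hθy : ‖θ • y‖ ≤ 1 := by rw [norm_smul, hθn, one_mul, hy1]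
    have hzy : θ • y = z := by
      obtain ⟨-, -, hseq⟩ := hzexp
      have := hseq (fun _ => θ • y) (fun _ => hθy)
        (by simpa only [hre_y, hzre] using tendsto_const_nhds)
      exact tendsto_nhds_unique tendsto_const_nhds this
    have hrot := aux_rotate hzexp hθn
    have hstar : (starRingEnd 𝕜) θ = c := by rw [hθdef, RCLike.conj_conj]
    rw [hstar, ← hzy, smul_smul, hcθ, one_smul] at hrot
    refine ⟨θ • y', ?_, hrot⟩
    intro h0
    have hn : ‖θ • y'‖ = 1 := by
      have h := norm_smul θ y'
      rw [h, hθn, hy'1, one_mul]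
    rw [h0, norm_zero] at hn; norm_num at hn
  · -- Density of strongly exposed points implies property [P]
    intro hdense ε hε
    obtain ⟨δ, hδ, hUC⟩ :=
      exists_forall_sphere_dist_add_le_two_sub (X →L[𝕜] 𝕜) hε
    refine ⟨min (δ / 2) (ε / 2), by positivity, ?_⟩
    intro x' hx' x hx hre
    obtain ⟨y, hy1, ⟨f, hf0, hfexp⟩, hxy⟩ :=
      hdense x hx (min (δ / 2) (ε / 2)) (by positivity)
    have hfn : (0:ℝ) < ‖f‖ := norm_pos_iff.2 hf0
    set g : X →L[𝕜] 𝕜 := ‖f‖⁻¹ • f with hg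
    have hgexp : StronglyExposes 𝕜 g y := aux_scale hfexp (by positivity)
    have hgn : ‖g‖ = 1 := by
      have h := norm_smul (‖f‖⁻¹ : ℝ) f
      rw [hg, h, norm_inv, norm_norm, inv_mul_cancel₀ hfn.ne']
    have hgy : RCLike.re (g y) = 1 := by rw [aux_re_eq_norm hgexp, hgn]
    have hgyn : ‖g y‖ = 1 := by
      refine le_antisymm ?_ ?_
      · calc ‖g y‖ ≤ ‖g‖ * ‖y‖ := g.le_opNorm y
          _ = 1 := by rw [hgn, hy1, one_mul]
      · rw [← hgy]; exact RCLike.re_le_norm _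
    have hxymin : ‖x - y‖ < δ / 2 := lt_of_lt_of_le hxy (min_le_left _ _)
    have hgx : 1 - δ / 2 < RCLike.re (g x) := by
      have h1 : RCLike.re (g x) = 1 + RCLike.re (g (x - y)) := by
        rw [show g x = g y + g (x - y) by rw [map_sub]; ring, map_add, hgy]
      have h3 : ‖g (x - y)‖ ≤ ‖x - y‖ := by
        calc ‖g (x - y)‖ ≤ ‖g‖ * ‖x - y‖ := g.le_opNorm _
          _ = ‖x - y‖ := by rw [hgn, one_mul]
      have h2 : |RCLike.re (g (x - y))| ≤ ‖x - y‖ :=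
        (RCLike.abs_re_le_norm _).trans h3
      have := (abs_le.1 h2).1
      linarith
    have hre' : 1 - δ / 2 < RCLike.re (x' x) :=
      lt_of_le_of_lt (by linarith [min_le_left (δ / 2) (ε / 2)]) hre
    have hsum : 2 - δ < ‖x' + g‖ := by
      have h1 : RCLike.re ((x' + g) x) ≤ ‖(x' + g) x‖ := RCLike.re_le_norm _
      have h2 : ‖(x' + g) x‖ ≤ ‖x' + g‖ := by
        calc ‖(x' + g) x‖ ≤ ‖x' + g‖ * ‖x‖ := (x' + g).le_opNorm x
          _ = ‖x' + g‖ := by rw [hx, mul_one]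
      have h3 : RCLike.re ((x' + g) x) = RCLike.re (x' x) + RCLike.re (g x) := by
        rw [ContinuousLinearMap.add_apply, map_add]
      linarith
    have hclose : ‖x' - g‖ < ε := by
      by_contra hcon
      push_neg at hcon
      have := hUC hx' hgn hcon
      linarith
    refine ⟨g, y, ⟨y, hgexp⟩, hgn, hy1, hgyn, hclose, ?_⟩
    have := lt_of_lt_of_le hxy (min_le_right (δ / 2) (ε / 2))
    linarith
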